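/- If q ∈ B_TV(p,δ) minimizes E_q(f) over B_TV(p,δ) and, among such minimizers, maximizes q(x_1), where f(x_1) ≤ f(x_i) for all i, then q(x_1) ≥ p(x_1) and q(x_i) ≤ p(x_i) for all i ≥ 2. -/

import Mathlib

open Finset

lemma sum_two_aux (n : ℕ) (F G : Fin n → ℝ) (a b : Fin n) (hab : a ≠ b)
    (hFG : ∀ j, j ≠ a → j ≠ b → F j = G j) :
    ∑ j, F j = ∑ j, G j + (F a - G a) + (F b - G b) := by
  classical
  have h : ∑ j, (F j - G j) = (F a - G a) + (F b - G b) := by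
    rw [← Finset.sum_subset (Finset.subset_univ ({a, b} : Finset (Fin n)))]
    · rw [Finset.sum_pair hab]
    · intro j _ hj
      simp only [Finset.mem_insert, Finset.mem_singleton, not_or] at hj
      rw [hFG j hj.1 hj.2]; ring
  have h2 : ∑ j, (F j - G j) = ∑ j, F j - ∑ j, G j := Finset.sum_sub_distrib _ _
  linarith

/-- If `q` minimizes the expectation of `f` over the TV ball and, among such
minimizers, maximizes `q x₀` (where `f x₀` is minimal), then `q x₀ ≥ p x₀` and
`q i ≤ p i` for all other `i`. -/
theorem tv_minimizer_structure
    (n : ℕ) (f p : Fin n → ℝ)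
    (x₀ : Fin n) (hx₀ : ∀ i, f x₀ ≤ f i)
    (hp0 : ∀ i, 0 ≤ p i) (hp1 : ∑ i, p i = 1)
    (δ : ℝ) (hδ0 : 0 ≤ δ) (hδ1 : δ ≤ 1)
    (B : Set (Fin n → ℝ))
    (hB : B = {q | ((∀ i, 0 ≤ q i) ∧ ∑ i, q i = 1) ∧
      (1 / 2) * ∑ i, |q i - p i| ≤ δ})
    (q : Fin n → ℝ) (hqB : q ∈ B)
    (hmin : ∀ q' ∈ B, ∑ i, q i * f i ≤ ∑ i, q' i * f i)
    (hmax : ∀ q' ∈ B, (∑ i, q' i * f i) = (∑ i, q i * f i) → q' x₀ ≤ q x₀) :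
    p x₀ ≤ q x₀ ∧ ∀ i, i ≠ x₀ → q i ≤ p i := by
  classical
  subst hB
  obtain ⟨⟨hq0, hq1⟩, hqTV⟩ := hqB
  have key : ∀ i, i ≠ x₀ → q i ≤ p i := by
    intro i hi
    by_contra h
    push_neg at h
    set ε : ℝ := q i - p i with hε
    have hεpos : 0 < ε := by linarith
    set q' : Fin n → ℝ := fun j => if j = x₀ then q x₀ + ε else if j = i then p i else q j
      with hq'
    have hq'x₀ : q' x₀ = q x₀ + ε := by simp [hq']
    have hq'i : q' i = p i := by simp [hq', hi]
    have hq'eq : ∀ j, j ≠ x₀ → j ≠ i → q' j = q j := by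
      intro j h1 h2; simp [hq', h1, h2]
    have hix : x₀ ≠ i := fun h => hi h.symm
    -- sums of q' j * g j
    have hsumg : ∀ g : Fin n → ℝ,
        ∑ j, q' j * g j = ∑ j, q j * g j + ε * (g x₀ - g i) := by
      intro g
      have := sum_two_aux n (fun j => q' j * g j) (fun j => q j * g j) x₀ i hix
        (by intro j h1 h2; rw [hq'eq j h1 h2])
      rw [this, hq'x₀, hq'i]
      ring
    -- membership in B
    have hsum1 : ∑ j, q' j = 1 := by
      have h1 := hsumg (fun _ => 1)
      simp only [mul_one] at h1
      rw [h1, hq1]; ring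
    have hq'0 : ∀ j, 0 ≤ q' j := by
      intro j
      by_cases h1 : j = x₀
      · rw [h1, hq'x₀]; have := hq0 x₀; linarith
      by_cases h2 : j = i
      · rw [h2, hq'i]; exact hp0 i
      · rw [hq'eq j h1 h2]; exact hq0 j
    have hTV : ∑ j, |q' j - p j| ≤ ∑ j, |q j - p j| := by
      have := sum_two_aux n (fun j => |q' j - p j|) (fun j => |q j - p j|) x₀ i hix
        (by intro j h1 h2; rw [hq'eq j h1 h2])
      rw [this, hq'x₀, hq'i]
      have h1 : |q x₀ + ε - p x₀| ≤ |q x₀ - p x₀| + ε := by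
        have := abs_add_le (q x₀ - p x₀) ε
        have hεabs : |ε| = ε := abs_of_pos hεpos
        calc |q x₀ + ε - p x₀| = |(q x₀ - p x₀) + ε| := by ring_nf
          _ ≤ |q x₀ - p x₀| + |ε| := abs_add_le _ _
          _ = |q x₀ - p x₀| + ε := by rw [hεabs]
      have h2 : |p i - p i| = 0 := by simp
      have h3 : |q i - p i| = ε := abs_of_pos (by linarith)
      linarith
    have hq'B : q' ∈ {q : Fin n → ℝ | ((∀ i, 0 ≤ q i) ∧ ∑ i, q i = 1) ∧
        (1 / 2) * ∑ i, |q i - p i| ≤ δ} := by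
      refine ⟨⟨hq'0, hsum1⟩, ?_⟩
      calc (1/2) * ∑ j, |q' j - p j| ≤ (1/2) * ∑ j, |q j - p j| := by linarith
        _ ≤ δ := hqTV
    -- expectation comparison
    have hE : ∑ j, q' j * f j ≤ ∑ j, q j * f j := by
      rw [hsumg f]
      have : ε * (f x₀ - f i) ≤ 0 :=
        mul_nonpos_of_nonneg_of_nonpos (le_of_lt hεpos) (by have := hx₀ i; linarith)
      linarith
    have hEeq : ∑ j, q' j * f j = ∑ j, q j * f j :=
      le_antisymm hE (hmin q' hq'B)
    have := hmax q' hq'B hEeq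
    rw [hq'x₀] at this
    linarith
  refine ⟨?_, key⟩
  by_contra h
  push_neg at h
  have : ∑ j, q j < ∑ j, p j := by
    apply Finset.sum_lt_sum
    · intro j _
      by_cases hj : j = x₀
      · subst hj; linarith
      · exact key j hj
    · exact ⟨x₀, Finset.mem_univ _, h⟩
  rw [hq1, hp1] at this
  linarith
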